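/- arXiv:1811.11502 — 5 statements merged into one kernel-verified Lean document; each statement's English description precedes it below -/
import Mathlib

section
/- (Positivity of the second-order scheme S1.) Let N ≥ 2, Δx > 0, Δt > 0. Suppose ρⁿ, ρⁿ⁺¹ ∈ ℝᴺ and real interior interface velocities u_{i+1/2} (i = 1,…,N−1) satisfy: F_{i+1/2} = ρᴱ_i·u_{i+1/2}⁺ + ρᵂ_{i+1}·u_{i+1/2}⁻ for i = 1,…,N−1, where ρᴱ, ρᵂ are the second-order minmod reconstructions of ρⁿ with θ = 2; F_{1/2} = F_{N+1/2} = 0 (no-flux boundary conditions); and ρⁿ⁺¹_i = ρⁿ_i − (Δt/Δx)(F_{i+1/2} − F_{i−1/2}) for every i = 1,…,N. If ρⁿ_i ≥ 0 for all i and the CFL condition 2·Δt·max(u_{i+1/2}⁺, −u_{i+1/2}⁻) ≤ Δx holds for every i = 1,…,N−1, then ρⁿ⁺¹_i ≥ 0 for all i. -/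
/-- The minmod limiter: `min` if all arguments are positive, `max` if all are negative,
and `0` otherwise. -/
noncomputable def minmod3 (a b c : ℝ) : ℝ :=
  if 0 < a ∧ 0 < b ∧ 0 < c then min a (min b c)
  else if a < 0 ∧ b < 0 ∧ c < 0 then max a (max b c)
  else 0

/-- The minmod mslope (θ = 2, mesh `dx`) of a vector `ρ` indexed by `1,…,N`:
interior cells `2 ≤ i ≤ N−1` use the minmod limiter; the first and last cells get `0`. -/
noncomputable def mslope (N : ℕ) (dx : ℝ) (ρ : ℕ → ℝ) (i : ℕ) : ℝ :=
  if 2 ≤ i ∧ i ≤ N - 1 then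
    minmod3 (2 * (ρ (i + 1) - ρ i) / dx)
      ((ρ (i + 1) - ρ (i - 1)) / (2 * dx))
      (2 * (ρ i - ρ (i - 1)) / dx)
  else 0

/-- East reconstruction: `ρᴱ_i = ρ_i + (dx/2)·σ_i`. -/
noncomputable def recE (N : ℕ) (dx : ℝ) (ρ : ℕ → ℝ) (i : ℕ) : ℝ :=
  ρ i + dx / 2 * mslope N dx ρ i

/-- West reconstruction: `ρᵂ_i = ρ_i − (dx/2)·σ_i`. -/
noncomputable def recW (N : ℕ) (dx : ℝ) (ρ : ℕ → ℝ) (i : ℕ) : ℝ :=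
  ρ i - dx / 2 * mslope N dx ρ i

/-- Positive part `z⁺ = max(z,0)`. -/
noncomputable def pospart (z : ℝ) : ℝ := max z 0

/-- Negative part `z⁻ = min(z,0)`. -/
noncomputable def negpart (z : ℝ) : ℝ := min z 0

lemma minmod3_bounds (a b c : ℝ) :
    minmod3 a b c = 0 ∨
    (0 < minmod3 a b c ∧ minmod3 a b c ≤ a ∧ minmod3 a b c ≤ c) ∨
    (minmod3 a b c < 0 ∧ a ≤ minmod3 a b c ∧ c ≤ minmod3 a b c) := by
  unfold minmod3
  split_ifs with h1 h2
  · exact Or.inr (Or.inl ⟨lt_min h1.1 (lt_min h1.2.1 h1.2.2),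
      min_le_left _ _, le_trans (min_le_right _ _) (min_le_right _ _)⟩)
  · exact Or.inr (Or.inr ⟨max_lt h2.1 (max_lt h2.2.1 h2.2.2),
      le_max_left _ _, le_trans (le_max_right _ _) (le_max_right _ _)⟩)
  · exact Or.inl rfl

lemma recE_nonneg (N : ℕ) (dx : ℝ) (hdx : 0 < dx) (ρ : ℕ → ℝ) (i : ℕ)
    (h1 : 1 ≤ i) (h2 : i ≤ N) (hpos : ∀ j, 1 ≤ j → j ≤ N → 0 ≤ ρ j) :
    0 ≤ recE N dx ρ i := by
  unfold recE mslope
  split_ifs with h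
  · obtain ⟨hi2, hiN⟩ := h
    have h1' : 0 ≤ ρ (i + 1) := hpos _ (by omega) (by omega)
    have h0 : 0 ≤ ρ i := hpos _ h1 h2
    rcases minmod3_bounds (2 * (ρ (i + 1) - ρ i) / dx)
      ((ρ (i + 1) - ρ (i - 1)) / (2 * dx)) (2 * (ρ i - ρ (i - 1)) / dx) with hm | hm | hm
    · rw [hm]; linarith
    · nlinarith [hm.1]
    · have ha : 2 * (ρ (i + 1) - ρ i) / dx ≤ _ := hm.2.1
      have key : ρ (i + 1) - ρ i ≤ dx / 2 *
          minmod3 (2 * (ρ (i + 1) - ρ i) / dx)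
            ((ρ (i + 1) - ρ (i - 1)) / (2 * dx)) (2 * (ρ i - ρ (i - 1)) / dx) := by
        have := mul_le_mul_of_nonneg_left ha (by positivity : (0:ℝ) ≤ dx / 2)
        calc ρ (i + 1) - ρ i = dx / 2 * (2 * (ρ (i + 1) - ρ i) / dx) := by
              field_simp
          _ ≤ _ := this
      linarith
  · have := hpos i h1 h2; simpa using this

lemma recW_nonneg (N : ℕ) (dx : ℝ) (hdx : 0 < dx) (ρ : ℕ → ℝ) (i : ℕ)
    (h1 : 1 ≤ i) (h2 : i ≤ N) (hpos : ∀ j, 1 ≤ j → j ≤ N → 0 ≤ ρ j) :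
    0 ≤ recW N dx ρ i := by
  unfold recW mslope
  split_ifs with h
  · obtain ⟨hi2, hiN⟩ := h
    have h1' : 0 ≤ ρ (i - 1) := hpos _ (by omega) (by omega)
    have h0 : 0 ≤ ρ i := hpos _ h1 h2
    rcases minmod3_bounds (2 * (ρ (i + 1) - ρ i) / dx)
      ((ρ (i + 1) - ρ (i - 1)) / (2 * dx)) (2 * (ρ i - ρ (i - 1)) / dx) with hm | hm | hm
    · rw [hm]; linarith
    · have hc : _ ≤ 2 * (ρ i - ρ (i - 1)) / dx := hm.2.2
      have key : dx / 2 *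
          minmod3 (2 * (ρ (i + 1) - ρ i) / dx)
            ((ρ (i + 1) - ρ (i - 1)) / (2 * dx)) (2 * (ρ i - ρ (i - 1)) / dx)
          ≤ ρ i - ρ (i - 1) := by
        have := mul_le_mul_of_nonneg_left hc (by positivity : (0:ℝ) ≤ dx / 2)
        calc _ ≤ dx / 2 * (2 * (ρ i - ρ (i - 1)) / dx) := this
          _ = ρ i - ρ (i - 1) := by field_simp
      linarith
    · nlinarith [hm.1]
  · have := hpos i h1 h2; simpa using this


/-- positivity of the second-order scheme S1 under the CFL condition
`2·Δt·max(u⁺, −u⁻) ≤ Δx` at every interior interface, for arbitrary interface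
velocities and no-flux boundary conditions. -/
theorem stmt_4 (N : ℕ) (hN : 2 ≤ N) (dx dt : ℝ) (hdx : 0 < dx) (hdt : 0 < dt)
    (ρn ρn1 u F : ℕ → ℝ)
    (hF : ∀ i, 1 ≤ i → i ≤ N - 1 →
      F i = recE N dx ρn i * pospart (u i) + recW N dx ρn (i + 1) * negpart (u i))
    (hF0 : F 0 = 0) (hFN : F N = 0)
    (hupd : ∀ i, 1 ≤ i → i ≤ N → ρn1 i = ρn i - dt / dx * (F i - F (i - 1)))
    (hpos : ∀ i, 1 ≤ i → i ≤ N → 0 ≤ ρn i)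
    (hCFL : ∀ i, 1 ≤ i → i ≤ N - 1 →
      2 * dt * max (pospart (u i)) (-negpart (u i)) ≤ dx) :
    ∀ i, 1 ≤ i → i ≤ N → 0 ≤ ρn1 i := by
  have hpp : ∀ z : ℝ, 0 ≤ pospart z := fun z => le_max_right _ _
  have hnp : ∀ z : ℝ, negpart z ≤ 0 := fun z => min_le_right _ _
  have hCFLp : ∀ j, 1 ≤ j → j ≤ N - 1 → 2 * dt * pospart (u j) ≤ dx := by
    intro j hj1 hj2
    have h := hCFL j hj1 hj2
    have := le_max_left (pospart (u j)) (-negpart (u j))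
    nlinarith
  have hCFLn : ∀ j, 1 ≤ j → j ≤ N - 1 → 2 * dt * (-negpart (u j)) ≤ dx := by
    intro j hj1 hj2
    have h := hCFL j hj1 hj2
    have := le_max_right (pospart (u j)) (-negpart (u j))
    nlinarith
  intro i hi1 hiN
  rw [hupd i hi1 hiN]
  rcases eq_or_lt_of_le hi1 with h1 | h1'
  · -- i = 1
    subst h1
    rw [hF 1 le_rfl (by omega)]
    simp only [Nat.sub_self, hF0]
    have hE1 : recE N dx ρn 1 = ρn 1 := by
      unfold recE mslope; norm_num
    rw [hE1]
    have h0 : 0 ≤ ρn 1 := hpos 1 le_rfl (by omega)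
    have hW2 : 0 ≤ recW N dx ρn 2 := recW_nonneg N dx hdx ρn 2 (by omega) hN hpos
    have hq : negpart (u 1) ≤ 0 := hnp _
    have hcfl : 2 * dt * pospart (u 1) ≤ dx := hCFLp 1 le_rfl (by omega)
    rw [sub_nonneg, div_mul_eq_mul_div, div_le_iff₀ hdx]
    nlinarith [mul_nonneg h0 (by linarith : (0:ℝ) ≤ dx - 2 * dt * pospart (u 1)),
      mul_nonneg (mul_nonneg hdt.le hW2) (neg_nonneg.2 hq)]
  · rcases eq_or_lt_of_le hiN with hN' | hN'
    · -- i = N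
      have hFi : F i = 0 := by rw [hN']; exact hFN
      rw [hFi, hF (i - 1) (by omega) (by omega)]
      have hone : i - 1 + 1 = i := by omega
      rw [hone]
      have hWN : recW N dx ρn i = ρn i := by
        unfold recW mslope
        have : ¬ (2 ≤ i ∧ i ≤ N - 1) := by omega
        simp [this]
      rw [hWN]
      have h0 : 0 ≤ ρn i := hpos i hi1 hiN
      have hE : 0 ≤ recE N dx ρn (i - 1) := recE_nonneg N dx hdx ρn (i - 1) (by omega) (by omega) hpos
      have hp : 0 ≤ pospart (u (i - 1)) := hpp _
      have hcfl : 2 * dt * (-negpart (u (i - 1))) ≤ dx := hCFLn (i - 1) (by omega) (by omega)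
      rw [sub_nonneg, div_mul_eq_mul_div, div_le_iff₀ hdx]
      nlinarith [mul_nonneg h0 (by linarith : (0:ℝ) ≤ dx + 2 * dt * negpart (u (i - 1))),
        mul_nonneg (mul_nonneg hdt.le hE) hp]
    · -- 2 ≤ i ≤ N - 1
      have hi2 : 2 ≤ i := h1'
      have hiN1 : i ≤ N - 1 := by omega
      rw [hF i (by omega) hiN1, hF (i - 1) (by omega) (by omega)]
      have hone : i - 1 + 1 = i := by omega
      rw [hone]
      have hA : 0 ≤ recE N dx ρn i := recE_nonneg N dx hdx ρn i hi1 hiN hpos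
      have hB : 0 ≤ recW N dx ρn i := recW_nonneg N dx hdx ρn i hi1 hiN hpos
      have hC : 0 ≤ recE N dx ρn (i - 1) := recE_nonneg N dx hdx ρn (i - 1) (by omega) (by omega) hpos
      have hD : 0 ≤ recW N dx ρn (i + 1) := recW_nonneg N dx hdx ρn (i + 1) (by omega) (by omega) hpos
      have hAB : recE N dx ρn i + recW N dx ρn i = 2 * ρn i := by
        unfold recE recW; ring
      have hp : 0 ≤ pospart (u i) := hpp _
      have hq : negpart (u i) ≤ 0 := hnp _
      have hp' : 0 ≤ pospart (u (i - 1)) := hpp _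
      have hq' : negpart (u (i - 1)) ≤ 0 := hnp _
      have hcfl1 : 2 * dt * pospart (u i) ≤ dx := hCFLp i (by omega) hiN1
      have hcfl2 : 2 * dt * (-negpart (u (i - 1))) ≤ dx := hCFLn (i - 1) (by omega) (by omega)
      rw [sub_nonneg, div_mul_eq_mul_div, div_le_iff₀ hdx]
      nlinarith [mul_nonneg hA (by linarith : (0:ℝ) ≤ dx - 2 * dt * pospart (u i)),
        mul_nonneg hB (by linarith : (0:ℝ) ≤ dx + 2 * dt * negpart (u (i - 1))),
        mul_nonneg (mul_nonneg hdt.le hD) (neg_nonneg.2 hq),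
        mul_nonneg (mul_nonneg hdt.le hC) hp']
end

section
/- (Positivity of the first-order explicit-reconstruction scheme.) Let N ≥ 2, Δx > 0, Δt > 0. Suppose ρⁿ, ρⁿ⁺¹ ∈ ℝᴺ and real interior interface velocities u_{i+1/2} (i = 1,…,N−1) satisfy F_{i+1/2} = ρⁿ_i·u_{i+1/2}⁺ + ρⁿ_{i+1}·u_{i+1/2}⁻ for i = 1,…,N−1, F_{1/2} = F_{N+1/2} = 0, and ρⁿ⁺¹_i = ρⁿ_i − (Δt/Δx)(F_{i+1/2} − F_{i−1/2}) for every i. If ρⁿ_i ≥ 0 for all i and Δt·(u_{i+1/2}⁺ − u_{i−1/2}⁻) ≤ Δx for every i = 1,…,N (with the conventions u_{1/2} = u_{N+1/2} = 0), then ρⁿ⁺¹_i ≥ 0 for all i. -/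
/-- positivity of the first-order explicit-reconstruction scheme under the
CFL condition `Δt·(u_{i+1/2}⁺ − u_{i−1/2}⁻) ≤ Δx` (with `u_{1/2} = u_{N+1/2} = 0`), for
arbitrary interface velocities and no-flux boundary conditions. -/
theorem stmt_5 (N : ℕ) (hN : 2 ≤ N) (dx dt : ℝ) (hdx : 0 < dx) (hdt : 0 < dt)
    (ρn ρn1 u F : ℕ → ℝ)
    (hu0 : u 0 = 0) (huN : u N = 0)
    (hF : ∀ i, 1 ≤ i → i ≤ N - 1 →
      F i = ρn i * pospart (u i) + ρn (i + 1) * negpart (u i))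
    (hF0 : F 0 = 0) (hFN : F N = 0)
    (hupd : ∀ i, 1 ≤ i → i ≤ N → ρn1 i = ρn i - dt / dx * (F i - F (i - 1)))
    (hpos : ∀ i, 1 ≤ i → i ≤ N → 0 ≤ ρn i)
    (hCFL : ∀ i, 1 ≤ i → i ≤ N →
      dt * (pospart (u i) - negpart (u (i - 1))) ≤ dx) :
    ∀ i, 1 ≤ i → i ≤ N → 0 ≤ ρn1 i := by
  intro i hi1 hiN
  have hddx : 0 ≤ dt / dx := le_of_lt (div_pos hdt hdx)
  have hFi : F i = ρn i * pospart (u i) + ρn (i + 1) * negpart (u i) := by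
    rcases eq_or_lt_of_le hiN with h | h
    · subst h
      simp [hFN, huN, pospart, negpart]
    · exact hF i hi1 (by omega)
  have hFim : F (i - 1) = ρn (i - 1) * pospart (u (i - 1)) + ρn i * negpart (u (i - 1)) := by
    rcases eq_or_lt_of_le hi1 with h | h
    · rw [← h]
      simp [hF0, hu0, pospart, negpart]
    · have := hF (i - 1) (by omega) (by omega)
      have e : i - 1 + 1 = i := by omega
      rw [this, e]
  have hA : 0 ≤ ρn (i - 1) * pospart (u (i - 1)) := by
    rcases eq_or_lt_of_le hi1 with h | h
    · rw [← h]; simp [hu0, pospart]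
    · exact mul_nonneg (hpos (i - 1) (by omega) (by omega)) (le_max_right _ _)
  have hB : ρn (i + 1) * negpart (u i) ≤ 0 := by
    rcases eq_or_lt_of_le hiN with h | h
    · subst h; simp [huN, negpart]
    · exact mul_nonpos_of_nonneg_of_nonpos (hpos (i + 1) (by omega) (by omega))
        (min_le_right _ _)
  have hρ : 0 ≤ ρn i := hpos i hi1 hiN
  have hcfl := hCFL i hi1 hiN
  have h1 : dt / dx * (pospart (u i) - negpart (u (i - 1))) ≤ 1 := by
    rw [div_mul_eq_mul_div, div_le_one hdx]; linarith
  rw [hupd i hi1 hiN, hFi, hFim]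
  nlinarith [mul_nonneg hρ (by linarith : (0:ℝ) ≤ 1 - dt / dx * (pospart (u i) - negpart (u (i - 1)))),
    mul_nonneg hddx hA, mul_nonpos_of_nonneg_of_nonpos hddx hB]
end

section
/- (Unconditional positivity of the implicit scheme S2.) Let N ≥ 2, Δx > 0, Δt > 0. Suppose ρⁿ, ρⁿ⁺¹ ∈ ℝᴺ and real interior interface velocities u_{i+1/2} (i = 1,…,N−1) satisfy the fully implicit upwind relations F_{i+1/2} = ρⁿ⁺¹_i·u_{i+1/2}⁺ + ρⁿ⁺¹_{i+1}·u_{i+1/2}⁻ for i = 1,…,N−1, F_{1/2} = F_{N+1/2} = 0 (no-flux boundary conditions), and ρⁿ⁺¹_i = ρⁿ_i − (Δt/Δx)(F_{i+1/2} − F_{i−1/2}) for every i = 1,…,N. If ρⁿ_i ≥ 0 for all i, then ρⁿ⁺¹_i ≥ 0 for all i, with no restriction on Δt, Δx, or the velocities. -/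
/-- Telescoping sum of flux differences over `Icc a b`. -/
lemma flux_telescope (F : ℕ → ℝ) : ∀ b a, 1 ≤ a → a ≤ b →
    ∑ i ∈ Finset.Icc a b, (F i - F (i - 1)) = F b - F (a - 1) := by
  intro b
  induction b with
  | zero => intro a h1 h2; omega
  | succ n ih =>
    intro a h1 h2
    rcases eq_or_lt_of_le h2 with h | h
    · rw [← h]
      simp
    · have han : a ≤ n := by omega
      rw [Finset.sum_Icc_succ_top (by omega), ih a h1 han]
      have : n + 1 - 1 = n := rfl
      rw [this]
      ring

/-- unconditional positivity of the implicit scheme S2, for arbitrary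
interface velocities, with no restriction on `Δt`, `Δx`, or the velocities. -/
theorem stmt_7 (N : ℕ) (hN : 2 ≤ N) (dx dt : ℝ) (hdx : 0 < dx) (hdt : 0 < dt)
    (ρn ρn1 u F : ℕ → ℝ)
    (hF : ∀ i, 1 ≤ i → i ≤ N - 1 →
      F i = ρn1 i * pospart (u i) + ρn1 (i + 1) * negpart (u i))
    (hF0 : F 0 = 0) (hFN : F N = 0)
    (hupd : ∀ i, 1 ≤ i → i ≤ N → ρn1 i = ρn i - dt / dx * (F i - F (i - 1)))
    (hpos : ∀ i, 1 ≤ i → i ≤ N → 0 ≤ ρn i) :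
    ∀ i, 1 ≤ i → i ≤ N → 0 ≤ ρn1 i := by
  classical
  by_contra hcon
  push_neg at hcon
  obtain ⟨m, hm1, hmN, hmneg⟩ := hcon
  -- b : largest j ≤ N with all of [m, j] negative
  set Q : ℕ → Prop := fun j => m ≤ j ∧ j ≤ N ∧ ∀ i, m ≤ i → i ≤ j → ρn1 i < 0 with hQdef
  have hQm : Q m := ⟨le_refl m, hmN, fun i h1 h2 => by
    have : i = m := le_antisymm h2 h1
    rwa [this]⟩
  set b := Nat.findGreatest Q N with hbdef
  have hQb : Q b := Nat.findGreatest_spec hmN hQm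
  have hmb : m ≤ b := hQb.1
  have hbN : b ≤ N := hQb.2.1
  have hbneg : ∀ i, m ≤ i → i ≤ b → ρn1 i < 0 := hQb.2.2
  have hbmax : b = N ∨ (b < N ∧ 0 ≤ ρn1 (b + 1)) := by
    rcases eq_or_lt_of_le hbN with h | h
    · exact Or.inl h
    · refine Or.inr ⟨h, ?_⟩
      have hnQ : ¬ Q (b + 1) :=
        Nat.findGreatest_is_greatest (n := N) (by rw [← hbdef]; omega) (by omega)
      by_contra hneg
      push_neg at hneg
      exact hnQ ⟨by omega, by omega, fun i h1 h2 => by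
        rcases eq_or_lt_of_le h2 with h3 | h3
        · rwa [h3]
        · exact hbneg i h1 (by omega)⟩
  -- a : smallest j ≥ 1 with all of [j, m] negative
  set P : ℕ → Prop := fun j => 1 ≤ j ∧ ∀ i, j ≤ i → i ≤ m → ρn1 i < 0 with hPdef
  have hPm : P m := ⟨hm1, fun i h1 h2 => by
    have : i = m := le_antisymm h2 h1
    rwa [this]⟩
  have hPex : ∃ j, P j := ⟨m, hPm⟩
  set a := Nat.find hPex with hadef
  have hPa : P a := Nat.find_spec hPex
  have ha1 : 1 ≤ a := hPa.1
  have ham : a ≤ m := Nat.find_le hPm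
  have haneg : ∀ i, a ≤ i → i ≤ m → ρn1 i < 0 := hPa.2
  have hamin : a = 1 ∨ (2 ≤ a ∧ 0 ≤ ρn1 (a - 1)) := by
    rcases eq_or_lt_of_le ha1 with h | h
    · exact Or.inl h.symm
    · refine Or.inr ⟨by omega, ?_⟩
      have hnP : ¬ P (a - 1) := Nat.find_min hPex (by omega)
      by_contra hneg
      push_neg at hneg
      exact hnP ⟨by omega, fun i h1 h2 => by
        rcases eq_or_lt_of_le h1 with h3 | h3
        · rw [← h3]; exact hneg
        · exact haneg i (by omega) h2⟩
  -- all entries in [a, b] are negative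
  have hallneg : ∀ i, a ≤ i → i ≤ b → ρn1 i < 0 := by
    intro i h1 h2
    rcases le_or_gt i m with h | h
    · exact haneg i h1 h
    · exact hbneg i (le_of_lt h) h2
  -- F b ≤ 0
  have hFb : F b ≤ 0 := by
    rcases hbmax with h | ⟨hbN', h⟩
    · rw [h, hFN]
    · rw [hF b (by omega) (by omega)]
      have h1 : ρn1 b * pospart (u b) ≤ 0 :=
        mul_nonpos_of_nonpos_of_nonneg (le_of_lt (hbneg b hmb le_rfl)) (le_max_right _ _)
      have h2 : ρn1 (b + 1) * negpart (u b) ≤ 0 :=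
        mul_nonpos_of_nonneg_of_nonpos h (min_le_right _ _)
      linarith
  -- F (a - 1) ≥ 0
  have hFa : 0 ≤ F (a - 1) := by
    rcases hamin with h | ⟨ha2, h⟩
    · rw [h]; simpa using hF0.ge
    · have key : F (a - 1) = ρn1 (a - 1) * pospart (u (a - 1)) + ρn1 (a - 1 + 1) * negpart (u (a - 1)) :=
        hF (a - 1) (by omega) (by omega)
      have haa : a - 1 + 1 = a := by omega
      rw [key, haa]
      have h1 : 0 ≤ ρn1 (a - 1) * pospart (u (a - 1)) :=
        mul_nonneg h (le_max_right _ _)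
      have h2 : 0 ≤ ρn1 a * negpart (u (a - 1)) := by
        have hx := haneg a le_rfl ham
        have hy : negpart (u (a - 1)) ≤ 0 := min_le_right _ _
        nlinarith
      linarith
  -- sum the update over Icc a b
  have hsum : ∑ i ∈ Finset.Icc a b, ρn1 i
      = ∑ i ∈ Finset.Icc a b, ρn i - dt / dx * (F b - F (a - 1)) := by
    have step : ∑ i ∈ Finset.Icc a b, ρn1 i
        = ∑ i ∈ Finset.Icc a b, (ρn i - dt / dx * (F i - F (i - 1))) := by
      apply Finset.sum_congr rfl
      intro i hi
      rw [Finset.mem_Icc] at hi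
      exact hupd i (by omega) (by omega)
    rw [step, Finset.sum_sub_distrib, ← Finset.mul_sum,
      flux_telescope F b a ha1 (le_trans ham hmb)]
  have hsum_n : 0 ≤ ∑ i ∈ Finset.Icc a b, ρn i := by
    apply Finset.sum_nonneg
    intro i hi
    rw [Finset.mem_Icc] at hi
    exact hpos i (by omega) (by omega)
  have hlam : 0 < dt / dx := div_pos hdt hdx
  have hflux : dt / dx * (F b - F (a - 1)) ≤ 0 :=
    mul_nonpos_of_nonneg_of_nonpos (le_of_lt hlam) (by linarith)
  have hsum_neg : ∑ i ∈ Finset.Icc a b, ρn1 i < 0 := by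
    apply Finset.sum_neg
    · intro i hi
      rw [Finset.mem_Icc] at hi
      exact hallneg i hi.1 hi.2
    · exact ⟨m, Finset.mem_Icc.mpr ⟨ham, hmb⟩⟩
  linarith
end

section
/- (Positivity of the two-dimensional dimensionally-split scheme S1.) Let N ≥ 2, Δx, Δy, Δt > 0. Suppose ρⁿ, ρ^{n+1/2}, ρⁿ⁺¹ ∈ ℝ^{N×N} and real interface velocities u_{i+1/2,j} (1 ≤ i ≤ N−1, 1 ≤ j ≤ N) and v_{i,j+1/2} (1 ≤ i ≤ N, 1 ≤ j ≤ N−1) satisfy: Step 1: F_{i+1/2,j} = ρᴱ_{ij}·u_{i+1/2,j}⁺ + ρᵂ_{i+1,j}·u_{i+1/2,j}⁻ where for each j the vectors ρᴱ_{·,j}, ρᵂ_{·,j} are the second-order minmod reconstructions (θ = 2, mesh Δx) of the row ρⁿ_{·,j}; F_{1/2,j} = F_{N+1/2,j} = 0; and ρ^{n+1/2}_{ij} = ρⁿ_{ij} − (Δt/Δx)(F_{i+1/2,j} − F_{i−1/2,j}). Step 2: G_{i,j+1/2} = ρᴺ_{ij}·v_{i,j+1/2}⁺ + ρˢ_{i,j+1}·v_{i,j+1/2}⁻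 where for each i the vectors ρᴺ_{i,·}, ρˢ_{i,·} are the second-order minmod reconstructions (θ = 2, mesh Δy) of the column ρ^{n+1/2}_{i,·}; G_{i,1/2} = G_{i,N+1/2} = 0; and ρⁿ⁺¹_{ij} = ρ^{n+1/2}_{ij} − (Δt/Δy)(G_{i,j+1/2} − G_{i,j−1/2}). If ρⁿ_{ij} ≥ 0 for all i,j and the CFL conditions 2·Δt·max(u_{i+1/2,j}⁺, −u_{i+1/2,j}⁻) ≤ Δx and 2·Δt·max(v_{i,j+1/2}⁺, −v_{i,j+1/2}⁻) ≤ Δy hold at every interface, then ρⁿ⁺¹_{ij} ≥ 0 for all i,j. -/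
lemma recE_add_recW (N : ℕ) (dx : ℝ) (ρ : ℕ → ℝ) (i : ℕ) :
    recE N dx ρ i + recW N dx ρ i = 2 * ρ i := by
  simp [recE, recW]; ring

lemma rec_nonneg (N : ℕ) (dx : ℝ) (ρ : ℕ → ℝ) (i : ℕ) (hdx : 0 < dx)
    (h1 : 1 ≤ i) (h2 : i ≤ N) (hρ : ∀ k, 1 ≤ k → k ≤ N → 0 ≤ ρ k) :
    0 ≤ recE N dx ρ i ∧ 0 ≤ recW N dx ρ i := by
  have hi : 0 ≤ ρ i := hρ i h1 h2
  unfold recE recW mslope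
  by_cases hint : 2 ≤ i ∧ i ≤ N - 1
  · simp only [if_pos hint]
    have him : 0 ≤ ρ (i - 1) := hρ (i - 1) (by omega) (by omega)
    have hip : 0 ≤ ρ (i + 1) := hρ (i + 1) (by omega) (by omega)
    unfold minmod3
    set a := 2 * (ρ (i + 1) - ρ i) / dx with ha
    set b := (ρ (i + 1) - ρ (i - 1)) / (2 * dx) with hb
    set c := 2 * (ρ i - ρ (i - 1)) / dx with hc
    have hxc : dx / 2 * c = ρ i - ρ (i - 1) := by
      rw [hc]; field_simp
    have hxa : dx / 2 * a = ρ (i + 1) - ρ i := by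
      rw [ha]; field_simp
    by_cases hp : 0 < a ∧ 0 < b ∧ 0 < c
    · simp only [if_pos hp]
      have hσ1 : 0 < min a (min b c) := lt_min hp.1 (lt_min hp.2.1 hp.2.2)
      have hσ2 : min a (min b c) ≤ c := le_trans (min_le_right _ _) (min_le_right _ _)
      have h3 : dx / 2 * min a (min b c) ≤ dx / 2 * c :=
        mul_le_mul_of_nonneg_left hσ2 (by positivity)
      have h4 : 0 ≤ dx / 2 * min a (min b c) := by positivity
      constructor <;> nlinarith
    · simp only [if_neg hp]
      by_cases hn : a < 0 ∧ b < 0 ∧ c < 0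
      · simp only [if_pos hn]
        have hσ1 : max a (max b c) < 0 := max_lt hn.1 (max_lt hn.2.1 hn.2.2)
        have hσ2 : a ≤ max a (max b c) := le_max_left _ _
        have h3 : dx / 2 * a ≤ dx / 2 * max a (max b c) :=
          mul_le_mul_of_nonneg_left hσ2 (by positivity)
        have h4 : dx / 2 * max a (max b c) ≤ 0 := by
          apply mul_nonpos_of_nonneg_of_nonpos (by positivity) hσ1.le
        constructor <;> nlinarith
      · simp only [if_neg hn, mul_zero, add_zero, sub_zero]
        exact ⟨hi, hi⟩
  · simp only [if_neg hint, mul_zero, add_zero, sub_zero]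
    exact ⟨hi, hi⟩

lemma pospart_nonneg (z : ℝ) : 0 ≤ pospart z := le_max_right _ _

lemma negpart_nonpos (z : ℝ) : negpart z ≤ 0 := min_le_right _ _

/-- Positivity of one 1D step. -/
lemma step_pos (N : ℕ) (hN : 2 ≤ N) (dx dt : ℝ) (hdx : 0 < dx) (hdt : 0 < dt)
    (ρ ρ' u F : ℕ → ℝ)
    (hF : ∀ i, 1 ≤ i → i ≤ N - 1 →
      F i = recE N dx ρ i * pospart (u i) + recW N dx ρ (i + 1) * negpart (u i))
    (hF0 : F 0 = 0) (hFN : F N = 0)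
    (hupd : ∀ i, 1 ≤ i → i ≤ N → ρ' i = ρ i - dt / dx * (F i - F (i - 1)))
    (hρ : ∀ k, 1 ≤ k → k ≤ N → 0 ≤ ρ k)
    (hCFL : ∀ i, 1 ≤ i → i ≤ N - 1 →
      2 * dt * max (pospart (u i)) (-negpart (u i)) ≤ dx) :
    ∀ i, 1 ≤ i → i ≤ N → 0 ≤ ρ' i := by
  have hl : 0 ≤ dt / dx := by positivity
  have hCFLp : ∀ k, 1 ≤ k → k ≤ N - 1 → dt / dx * pospart (u k) ≤ 1 / 2 := by
    intro k hk1 hk2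
    have h := hCFL k hk1 hk2
    have h1 : 2 * dt * pospart (u k) ≤ dx := by
      refine le_trans ?_ h
      have := le_max_left (pospart (u k)) (-negpart (u k))
      nlinarith [hdt.le]
    rw [div_mul_eq_mul_div, div_le_iff₀ hdx]
    linarith
  have hCFLm : ∀ k, 1 ≤ k → k ≤ N - 1 → -(1 / 2) ≤ dt / dx * negpart (u k) := by
    intro k hk1 hk2
    have h := hCFL k hk1 hk2
    have h1 : 2 * dt * (-negpart (u k)) ≤ dx := by
      refine le_trans ?_ h
      have := le_max_right (pospart (u k)) (-negpart (u k))
      nlinarith [hdt.le]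
    rw [div_mul_eq_mul_div, le_div_iff₀ hdx]
    linarith
  intro i h1 h2
  rw [hupd i h1 h2]
  rcases eq_or_lt_of_le h1 with h1e | h1l
  · -- i = 1
    subst h1e
    simp only [Nat.sub_self]  -- (1-1)=0
    rw [hF 1 le_rfl (by omega), hF0]
    obtain ⟨hE1, hW1⟩ := rec_nonneg N dx ρ 1 hdx le_rfl (by omega) hρ
    obtain ⟨hE2, hW2⟩ := rec_nonneg N dx ρ 2 hdx (by omega) (by omega) hρ
    have hsum := recE_add_recW N dx ρ 1
    have hcp := hCFLp 1 le_rfl (by omega)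
    have hm := negpart_nonpos (u 1)
    have hp := pospart_nonneg (u 1)
    nlinarith [mul_nonneg hE1 (by linarith : (0:ℝ) ≤ 1 / 2 - dt / dx * pospart (u 1)),
      mul_nonneg (mul_nonneg hl hW2) (by linarith : (0:ℝ) ≤ -negpart (u 1)),
      hρ 1 le_rfl (by omega)]
  · rcases eq_or_lt_of_le h2 with h2e | h2l
    · -- i = N
      rw [h2e]
      have hNN : N - 1 + 1 = N := by omega
      have hFN1 := hF (N - 1) (by omega) le_rfl
      rw [hNN] at hFN1
      rw [hFN, hFN1]
      obtain ⟨hEN, hWN⟩ := rec_nonneg N dx ρ N hdx (by omega) le_rfl hρ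
      obtain ⟨hE', hW'⟩ := rec_nonneg N dx ρ (N - 1) hdx (by omega) (by omega) hρ
      have hsum := recE_add_recW N dx ρ N
      have hcm := hCFLm (N - 1) (by omega) le_rfl
      have hm := negpart_nonpos (u (N - 1))
      have hp := pospart_nonneg (u (N - 1))
      nlinarith [mul_nonneg hWN (by linarith : (0:ℝ) ≤ 1 / 2 + dt / dx * negpart (u (N - 1))),
        mul_nonneg (mul_nonneg hl hE') hp,
        hρ N (by omega) le_rfl]
    · -- 2 ≤ i ≤ N - 1
      have hi2 : 2 ≤ i := h1l
      have hiN : i ≤ N - 1 := by omega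
      have hii : i - 1 + 1 = i := by omega
      have hFi := hF i (by omega) hiN
      have hFim := hF (i - 1) (by omega) (by omega)
      rw [hii] at hFim
      rw [hFi, hFim]
      obtain ⟨hA, hB⟩ := rec_nonneg N dx ρ i hdx (by omega) (by omega) hρ
      obtain ⟨hA', _⟩ := rec_nonneg N dx ρ (i - 1) hdx (by omega) (by omega) hρ
      obtain ⟨_, hB'⟩ := rec_nonneg N dx ρ (i + 1) hdx (by omega) (by omega) hρ
      have hsum := recE_add_recW N dx ρ i
      have hcp := hCFLp i (by omega) hiN
      have hcm := hCFLm (i - 1) (by omega) (by omega)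
      have hm := negpart_nonpos (u i)
      have hp' := pospart_nonneg (u (i - 1))
      nlinarith [mul_nonneg hA (by linarith : (0:ℝ) ≤ 1 / 2 - dt / dx * pospart (u i)),
        mul_nonneg hB (by linarith : (0:ℝ) ≤ 1 / 2 + dt / dx * negpart (u (i - 1))),
        mul_nonneg (mul_nonneg hl hA') hp',
        mul_nonneg (mul_nonneg hl hB') (by linarith : (0:ℝ) ≤ -negpart (u i))]

/-- positivity of the two-dimensional dimensionally-split scheme S1 under
the CFL conditions, for arbitrary interface velocities. -/
theorem stmt_10 (N : ℕ) (hN : 2 ≤ N) (dx dy dt : ℝ)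
    (hdx : 0 < dx) (hdy : 0 < dy) (hdt : 0 < dt)
    (ρn ρh ρn1 u v F G : ℕ → ℕ → ℝ)
    -- Step 1: evolution in the x-direction, row-wise reconstructions of ρⁿ
    (hF : ∀ i j, 1 ≤ i → i ≤ N - 1 → 1 ≤ j → j ≤ N →
      F i j = recE N dx (fun i' => ρn i' j) i * pospart (u i j)
        + recW N dx (fun i' => ρn i' j) (i + 1) * negpart (u i j))
    (hF0 : ∀ j, 1 ≤ j → j ≤ N → F 0 j = 0)
    (hFN : ∀ j, 1 ≤ j → j ≤ N → F N j = 0)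
    (hupd1 : ∀ i j, 1 ≤ i → i ≤ N → 1 ≤ j → j ≤ N →
      ρh i j = ρn i j - dt / dx * (F i j - F (i - 1) j))
    -- Step 2: evolution in the y-direction, column-wise reconstructions of ρ^{n+1/2}
    (hG : ∀ i j, 1 ≤ i → i ≤ N → 1 ≤ j → j ≤ N - 1 →
      G i j = recE N dy (fun j' => ρh i j') j * pospart (v i j)
        + recW N dy (fun j' => ρh i j') (j + 1) * negpart (v i j))
    (hG0 : ∀ i, 1 ≤ i → i ≤ N → G i 0 = 0)
    (hGN : ∀ i, 1 ≤ i → i ≤ N → G i N = 0)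
    (hupd2 : ∀ i j, 1 ≤ i → i ≤ N → 1 ≤ j → j ≤ N →
      ρn1 i j = ρh i j - dt / dy * (G i j - G i (j - 1)))
    (hpos : ∀ i j, 1 ≤ i → i ≤ N → 1 ≤ j → j ≤ N → 0 ≤ ρn i j)
    (hCFLu : ∀ i j, 1 ≤ i → i ≤ N - 1 → 1 ≤ j → j ≤ N →
      2 * dt * max (pospart (u i j)) (-negpart (u i j)) ≤ dx)
    (hCFLv : ∀ i j, 1 ≤ i → i ≤ N → 1 ≤ j → j ≤ N - 1 →
      2 * dt * max (pospart (v i j)) (-negpart (v i j)) ≤ dy) :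
    ∀ i j, 1 ≤ i → i ≤ N → 1 ≤ j → j ≤ N → 0 ≤ ρn1 i j := by
  have hρh : ∀ i j, 1 ≤ i → i ≤ N → 1 ≤ j → j ≤ N → 0 ≤ ρh i j := by
    intro i j hi1 hi2 hj1 hj2
    exact step_pos N hN dx dt hdx hdt (fun i' => ρn i' j) (fun i' => ρh i' j)
      (fun i' => u i' j) (fun i' => F i' j)
      (fun i' h1 h2 => hF i' j h1 h2 hj1 hj2) (hF0 j hj1 hj2) (hFN j hj1 hj2)
      (fun i' h1 h2 => hupd1 i' j h1 h2 hj1 hj2)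
      (fun k h1 h2 => hpos k j h1 h2 hj1 hj2)
      (fun k h1 h2 => hCFLu k j h1 h2 hj1 hj2) i hi1 hi2
  intro i j hi1 hi2 hj1 hj2
  exact step_pos N hN dy dt hdy hdt (fun j' => ρh i j') (fun j' => ρn1 i j')
    (fun j' => v i j') (fun j' => G i j')
    (fun j' h1 h2 => hG i j' hi1 hi2 h1 h2) (hG0 i hi1 hi2) (hGN i hi1 hi2)
    (fun j' h1 h2 => hupd2 i j' hi1 hi2 h1 h2)
    (fun k h1 h2 => hρh i k hi1 hi2 h1 h2)
    (fun k h1 h2 => hCFLv i k hi1 hi2 h1 h2) j hj1 hj2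
end

section
/- (Unconditional positivity of the two-dimensional dimensionally-split implicit scheme S2.) Let N ≥ 2, Δx, Δy, Δt > 0. Suppose ρⁿ, ρ^{n+1/2}, ρⁿ⁺¹ ∈ ℝ^{N×N} and real interface velocities u_{i+1/2,j} (1 ≤ i ≤ N−1) and v_{i,j+1/2} (1 ≤ j ≤ N−1) satisfy: Step 1: F_{i+1/2,j} = ρ^{n+1/2}_{ij}·u_{i+1/2,j}⁺ + ρ^{n+1/2}_{i+1,j}·u_{i+1/2,j}⁻, F_{1/2,j} = F_{N+1/2,j} = 0, and ρ^{n+1/2}_{ij} = ρⁿ_{ij} − (Δt/Δx)(F_{i+1/2,j} − F_{i−1/2,j}); Step 2: G_{i,j+1/2} = ρⁿ⁺¹_{ij}·v_{i,j+1/2}⁺ + ρⁿ⁺¹_{i,j+1}·v_{i,j+1/2}⁻, G_{i,1/2} = G_{i,N+1/2} = 0, and ρⁿ⁺¹_{ij} = ρ^{n+1/2}_{ij} − (Δt/Δy)(G_{i,j+1/2} − G_{i,j−1/2}). If ρⁿ_{ij} ≥ 0 for all i,j, then ρⁿ⁺¹_{ij} ≥ 0 for all i,j, with no restriction on Δt,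 Δx, Δy, or the velocities. -/
/-- 1D positivity of the implicit upwind scheme with zero-flux boundary conditions. -/
lemma upwind1d (N : ℕ) (c : ℝ) (hc : 0 ≤ c) (r ρ u F : ℕ → ℝ)
    (hF : ∀ i, 1 ≤ i → i ≤ N - 1 →
      F i = ρ i * pospart (u i) + ρ (i + 1) * negpart (u i))
    (hF0 : F 0 = 0) (hFN : F N = 0)
    (hupd : ∀ i, 1 ≤ i → i ≤ N → ρ i = r i - c * (F i - F (i - 1)))
    (hr : ∀ i, 1 ≤ i → i ≤ N → 0 ≤ r i) :
    ∀ i, 1 ≤ i → i ≤ N → 0 ≤ ρ i := by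
  classical
  set s : ℕ → ℝ := fun i => if 1 ≤ i ∧ i ≤ N ∧ ρ i < 0 then 1 else 0 with hs
  have hs0 : s 0 = 0 := by simp [hs]
  have hsnonneg : ∀ i, 0 ≤ s i := by
    intro i; by_cases h : 1 ≤ i ∧ i ≤ N ∧ ρ i < 0 <;> simp [hs, h]
  -- Abel summation identity
  have habel : ∀ M : ℕ,
      ∑ i ∈ Finset.range M, s (i + 1) * (F (i + 1) - F i)
        = s M * F M + ∑ i ∈ Finset.range M, (s i - s (i + 1)) * F i := by
    intro M
    induction M with
    | zero => simp [hs0]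
    | succ M ih =>
        rw [Finset.sum_range_succ, ih, Finset.sum_range_succ]; ring
  -- each Abel term is nonpositive
  have hterm : ∀ i ∈ Finset.range N, (s i - s (i + 1)) * F i ≤ 0 := by
    intro i hi
    rw [Finset.mem_range] at hi
    rcases Nat.eq_zero_or_pos i with rfl | hi1
    · rw [hF0]; simp
    · have hi1' : 1 ≤ i := hi1
      have hne : i ≠ 0 := Nat.one_le_iff_ne_zero.mp hi1'
      have hiN1 : i ≤ N - 1 := Nat.le_sub_one_of_lt hi
      have hiN : i ≤ N := Nat.le_of_lt hi
      have hi1N : i + 1 ≤ N := hi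
      have ha : 0 ≤ pospart (u i) := le_max_right _ _
      have hb : negpart (u i) ≤ 0 := min_le_right _ _
      have hFi : F i = ρ i * pospart (u i) + ρ (i + 1) * negpart (u i) :=
        hF i hi1 hiN1
      rcases lt_or_ge (ρ i) 0 with h1 | h1 <;> rcases lt_or_ge (ρ (i + 1)) 0 with h2 | h2
      · simp [hs, hi1', hne, hiN, hi1N, h1, h2]
      · have hsi : s i = 1 := by simp [hs, hi1', hne, hiN, h1]
        have hsi1 : s (i + 1) = 0 := by simp [hs, not_lt.mpr h2]
        rw [hsi, hsi1, hFi]; nlinarith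
      · have hsi : s i = 0 := by simp [hs, not_lt.mpr h1]
        have hsi1 : s (i + 1) = 1 := by simp [hs, hi1N, h2]
        rw [hsi, hsi1, hFi]; nlinarith
      · simp [hs, not_lt.mpr h1, not_lt.mpr h2]
  have hT : ∑ i ∈ Finset.range N, s (i + 1) * (F (i + 1) - F i) ≤ 0 := by
    rw [habel N, hFN]
    have := Finset.sum_nonpos hterm
    linarith
  -- main identity
  have hmain : ∑ i ∈ Finset.range N, s (i + 1) * ρ (i + 1)
      = ∑ i ∈ Finset.range N, s (i + 1) * r (i + 1)
        - c * ∑ i ∈ Finset.range N, s (i + 1) * (F (i + 1) - F i) := by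
    rw [Finset.mul_sum, ← Finset.sum_sub_distrib]
    apply Finset.sum_congr rfl
    intro i hi
    rw [Finset.mem_range] at hi
    have h := hupd (i + 1) (Nat.le_add_left 1 i) hi
    simp only [Nat.add_sub_cancel] at h
    rw [h]; ring
  have hrsum : 0 ≤ ∑ i ∈ Finset.range N, s (i + 1) * r (i + 1) := by
    apply Finset.sum_nonneg
    intro i hi
    rw [Finset.mem_range] at hi
    exact mul_nonneg (hsnonneg _) (hr (i + 1) (Nat.le_add_left 1 i) hi)
  have hge : 0 ≤ ∑ i ∈ Finset.range N, s (i + 1) * ρ (i + 1) := by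
    rw [hmain]
    nlinarith
  have hle : ∀ i ∈ Finset.range N, s (i + 1) * ρ (i + 1) ≤ 0 := by
    intro i _
    by_cases h : 1 ≤ i + 1 ∧ i + 1 ≤ N ∧ ρ (i + 1) < 0
    · have : s (i + 1) = 1 := by simp [hs, h]
      rw [this, one_mul]; exact le_of_lt h.2.2
    · have : s (i + 1) = 0 := by simp only [hs]; rw [if_neg h]
      rw [this, zero_mul]
  have hzero : ∀ i ∈ Finset.range N, s (i + 1) * ρ (i + 1) = 0 := by
    rw [← Finset.sum_eq_zero_iff_of_nonpos hle]
    exact le_antisymm (Finset.sum_nonpos hle) hge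
  intro i hi1 hiN
  by_contra hcon
  push_neg at hcon
  have hmem : i - 1 ∈ Finset.range N := by
    rw [Finset.mem_range]
    omega
  have hkey := hzero (i - 1) hmem
  have hieq : i - 1 + 1 = i := Nat.succ_pred_eq_of_pos hi1
  rw [hieq] at hkey
  have hsi : s i = 1 := by simp [hs, hi1, Nat.one_le_iff_ne_zero.mp hi1, hiN, hcon]
  rw [hsi, one_mul] at hkey
  exact absurd hkey (ne_of_lt hcon)

/-- unconditional positivity of the two-dimensional dimensionally-split
implicit scheme S2, for arbitrary interface velocities, with no restriction on `Δt`,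
`Δx`, `Δy`, or the velocities. -/
theorem stmt_12 (N : ℕ) (hN : 2 ≤ N) (dx dy dt : ℝ)
    (hdx : 0 < dx) (hdy : 0 < dy) (hdt : 0 < dt)
    (ρn ρh ρn1 u v F G : ℕ → ℕ → ℝ)
    -- Step 1: implicit evolution in the x-direction
    (hF : ∀ i j, 1 ≤ i → i ≤ N - 1 → 1 ≤ j → j ≤ N →
      F i j = ρh i j * pospart (u i j) + ρh (i + 1) j * negpart (u i j))
    (hF0 : ∀ j, 1 ≤ j → j ≤ N → F 0 j = 0)
    (hFN : ∀ j, 1 ≤ j → j ≤ N → F N j = 0)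
    (hupd1 : ∀ i j, 1 ≤ i → i ≤ N → 1 ≤ j → j ≤ N →
      ρh i j = ρn i j - dt / dx * (F i j - F (i - 1) j))
    -- Step 2: implicit evolution in the y-direction
    (hG : ∀ i j, 1 ≤ i → i ≤ N → 1 ≤ j → j ≤ N - 1 →
      G i j = ρn1 i j * pospart (v i j) + ρn1 i (j + 1) * negpart (v i j))
    (hG0 : ∀ i, 1 ≤ i → i ≤ N → G i 0 = 0)
    (hGN : ∀ i, 1 ≤ i → i ≤ N → G i N = 0)
    (hupd2 : ∀ i j, 1 ≤ i → i ≤ N → 1 ≤ j → j ≤ N →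
      ρn1 i j = ρh i j - dt / dy * (G i j - G i (j - 1)))
    (hpos : ∀ i j, 1 ≤ i → i ≤ N → 1 ≤ j → j ≤ N → 0 ≤ ρn i j) :
    ∀ i j, 1 ≤ i → i ≤ N → 1 ≤ j → j ≤ N → 0 ≤ ρn1 i j := by
  have hcx : (0:ℝ) ≤ dt / dx := le_of_lt (div_pos hdt hdx)
  have hcy : (0:ℝ) ≤ dt / dy := le_of_lt (div_pos hdt hdy)
  -- Step 1: positivity of the half step, for each fixed row j
  have hhalf : ∀ i j, 1 ≤ i → i ≤ N → 1 ≤ j → j ≤ N → 0 ≤ ρh i j := by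
    intro i j hi1 hiN hj1 hjN
    exact upwind1d N (dt / dx) hcx (fun i => ρn i j) (fun i => ρh i j)
      (fun i => u i j) (fun i => F i j)
      (fun i h1 h2 => hF i j h1 h2 hj1 hjN)
      (hF0 j hj1 hjN) (hFN j hj1 hjN)
      (fun i h1 h2 => hupd1 i j h1 h2 hj1 hjN)
      (fun i h1 h2 => hpos i j h1 h2 hj1 hjN) i hi1 hiN
  -- Step 2: positivity of the full step, for each fixed column i
  intro i j hi1 hiN hj1 hjN
  exact upwind1d N (dt / dy) hcy (fun j => ρh i j) (fun j => ρn1 i j)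
    (fun j => v i j) (fun j => G i j)
    (fun j h1 h2 => hG i j hi1 hiN h1 h2)
    (hG0 i hi1 hiN) (hGN i hi1 hiN)
    (fun j h1 h2 => hupd2 i j hi1 hiN h1 h2)
    (fun j h1 h2 => hhalf i j hi1 hiN h1 h2) j hj1 hjN
end
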